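/- For all positive integers k ≤ n there exists a k-uniform hypergraph H on n vertices with δ_{k−1}(H) ≥ n/2 − k − 1 such that H contains no r-factor for any odd positive integer r. -/

import Mathlib

theorem no_odd_factor (k n : ℕ) (hk : 0 < k) (hkn : k ≤ n) :
    ∃ H : Finset (Finset (Fin n)),
      (∀ f ∈ H, f.card = k) ∧
      (∀ A : Finset (Fin n), A.card = k - 1 →
        (n : ℝ) / 2 - k - 1 ≤ ((H.filter (fun f => A ⊆ f)).card : ℝ)) ∧
      (∀ r : ℕ, Odd r → 0 < r →
        ¬ ∃ F ⊆ H, ∀ v : Fin n, (F.filter (fun f => v ∈ f)).card = r) := by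
  classical
  have hn1 : 1 ≤ n := hk.trans_le hkn
  set m := n / 2 with hm
  set d := (if Odd m then m else m + 1) with hd
  have hdm : d = m ∨ d = m + 1 := by
    by_cases h : Odd m <;> simp [hd, h]
  have hdodd : Odd d := by
    by_cases h : Odd m
    · simpa [hd, h] using h
    · have : Even m := Nat.not_odd_iff_even.mp h
      simpa [hd, h] using this.add_one
  have hdn : d ≤ n := by omega
  have hnat1 : n ≤ 2 * d + 1 := by omega
  have hnat2 : 2 * d ≤ n + 2 := by omega
  have hdlow : (n : ℝ) / 2 - 1 ≤ (d : ℝ) := by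
    have : (n : ℝ) ≤ 2 * d + 1 := by exact_mod_cast hnat1
    linarith
  have hdhigh : (d : ℝ) ≤ (n : ℝ) / 2 + 1 := by
    have : (2 * d : ℝ) ≤ (n : ℝ) + 2 := by exact_mod_cast hnat2
    linarith
  set D : Finset (Fin n) :=
    (Finset.range d).attachFin (fun x hx => lt_of_lt_of_le (Finset.mem_range.mp hx) hdn) with hDdef
  have hD : D.card = d := by
    simp [hDdef]
  set H : Finset (Finset (Fin n)) :=
    Finset.univ.filter (fun f => f.card = k ∧ Even ((f ∩ D).card)) with hH
  refine ⟨H, ?_, ?_, ?_⟩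
  · intro f hf
    exact ((Finset.mem_filter.mp hf).2).1
  · intro A hA
    have hkR : ((k - 1 : ℕ) : ℝ) = (k : ℝ) - 1 := by
      rw [Nat.cast_sub hk, Nat.cast_one]
    by_cases ha : Even ((A ∩ D).card)
    · -- take v outside D ∪ A
      set S : Finset (Fin n) := Finset.univ \ (D ∪ A) with hS
      have hmem : ∀ v ∈ S, insert v A ∈ H.filter (fun f => A ⊆ f) := by
        intro v hv
        rw [hS, Finset.mem_sdiff, Finset.mem_union] at hv
        push_neg at hv
        obtain ⟨-, hvD, hvA⟩ := hv
        rw [Finset.mem_filter]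
        refine ⟨?_, Finset.subset_insert _ _⟩
        rw [hH, Finset.mem_filter]
        refine ⟨Finset.mem_univ _, ?_, ?_⟩
        · rw [Finset.card_insert_of_notMem hvA, hA]; omega
        · rw [Finset.insert_inter_of_notMem hvD]; exact ha
      have hinj : Set.InjOn (fun v => insert v A) S := by
        intro v hv w hw h
        simp only at h
        have hvA : v ∉ A := by
          have := (Finset.mem_sdiff.mp hv).2
          rw [Finset.mem_union] at this; push_neg at this; exact this.2
        have : v ∈ insert w A := h ▸ Finset.mem_insert_self v A
        rcases Finset.mem_insert.mp this with h1 | h1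
        · exact h1
        · exact absurd h1 hvA
      have hle := Finset.card_le_card_of_injOn (fun v => insert v A) hmem hinj
      have hScard : (S.card : ℝ) = (n : ℝ) - ((D ∪ A).card : ℝ) := by
        rw [hS, Finset.card_sdiff_of_subset (Finset.subset_univ _), Finset.card_univ,
          Fintype.card_fin, Nat.cast_sub ((Finset.card_le_univ _).trans_eq (by simp))]
      have hUAcard : ((D ∪ A).card : ℝ) ≤ (d : ℝ) + ((k - 1 : ℕ) : ℝ) := by
        have := Finset.card_union_le D A
        rw [hD, hA] at this
        exact_mod_cast this
      have hle' : (S.card : ℝ) ≤ ((H.filter (fun f => A ⊆ f)).card : ℝ) := by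
        exact_mod_cast hle
      rw [hkR] at hUAcard
      linarith
    · -- take v in D \ A
      set S : Finset (Fin n) := D \ A with hS
      have hmem : ∀ v ∈ S, insert v A ∈ H.filter (fun f => A ⊆ f) := by
        intro v hv
        rw [hS, Finset.mem_sdiff] at hv
        obtain ⟨hvD, hvA⟩ := hv
        rw [Finset.mem_filter]
        refine ⟨?_, Finset.subset_insert _ _⟩
        rw [hH, Finset.mem_filter]
        refine ⟨Finset.mem_univ _, ?_, ?_⟩
        · rw [Finset.card_insert_of_notMem hvA, hA]; omega
        · rw [Finset.insert_inter_of_mem hvD,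
            Finset.card_insert_of_notMem (fun h => hvA (Finset.mem_inter.mp h).1)]
          have : Odd ((A ∩ D).card) := Nat.not_even_iff_odd.mp ha
          exact this.add_one
      have hinj : Set.InjOn (fun v => insert v A) S := by
        intro v hv w hw h
        simp only at h
        have hvA : v ∉ A := (Finset.mem_sdiff.mp hv).2
        have : v ∈ insert w A := h ▸ Finset.mem_insert_self v A
        rcases Finset.mem_insert.mp this with h1 | h1
        · exact h1
        · exact absurd h1 hvA
      have hle := Finset.card_le_card_of_injOn (fun v => insert v A) hmem hinj
      have hScard : (d : ℝ) - ((k - 1 : ℕ) : ℝ) ≤ (S.card : ℝ) := by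
        have h1 : D.card ≤ S.card + A.card := Finset.card_le_card_sdiff_add_card
        rw [hD, hA] at h1
        have : (d : ℝ) ≤ (S.card : ℝ) + ((k - 1 : ℕ) : ℝ) := by exact_mod_cast h1
        linarith
      have hle' : (S.card : ℝ) ≤ ((H.filter (fun f => A ⊆ f)).card : ℝ) := by
        exact_mod_cast hle
      rw [hkR] at hScard
      linarith
  · rintro r hr hrpos ⟨F, hFH, hdeg⟩
    have hFeven : ∀ f ∈ F, Even ((f ∩ D).card) := fun f hf =>
      ((Finset.mem_filter.mp (hFH hf)).2).2
    have heven : Even (∑ f ∈ F, (f ∩ D).card) := Finset.even_sum _ hFeven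
    have hsum : ∑ f ∈ F, (f ∩ D).card = d * r := by
      calc ∑ f ∈ F, (f ∩ D).card
          = ∑ f ∈ F, ∑ v ∈ D, (if v ∈ f then 1 else 0) := by
            refine Finset.sum_congr rfl fun f hf => ?_
            rw [← Finset.card_filter]
            congr 1
            rw [Finset.filter_mem_eq_inter, Finset.inter_comm]
        _ = ∑ v ∈ D, ∑ f ∈ F, (if v ∈ f then 1 else 0) := Finset.sum_comm
        _ = ∑ v ∈ D, (F.filter (fun f => v ∈ f)).card := by
            refine Finset.sum_congr rfl fun v hv => ?_
            rw [Finset.card_filter]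
        _ = ∑ v ∈ D, r := Finset.sum_congr rfl fun v _ => hdeg v
        _ = d * r := by rw [Finset.sum_const, hD, smul_eq_mul]
    rw [hsum] at heven
    exact (Nat.not_odd_iff_even.mpr heven) (hdodd.mul hr)
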